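/- Let K be a simplicial complex and S ⊆ K. Then S is a cosimplicial complex if and only if S is the intersection of a set open for K and a set closed for K. -/
import Mathlib


open Finset

abbrev Simplex : Type := Finset ℕ
abbrev Cplx : Type := Finset (Finset ℕ)

/-- A simplicial complex: a finite set of nonempty finite sets closed under
taking nonempty subsets. -/
def IsSimpComplex (K : Cplx) : Prop :=
  (∀ τ ∈ K, τ.Nonempty) ∧ ∀ τ ∈ K, ∀ σ : Simplex, σ ⊆ τ → σ.Nonempty → σ ∈ K

/-- A cosimplicial complex: for all σ, τ ∈ S, every ν with σ ⊆ ν ⊆ τ is in S. -/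
def IsCosimplicial (S : Cplx) : Prop :=
  ∀ σ ∈ S, ∀ τ ∈ S, ∀ ν : Simplex, σ ⊆ ν → ν ⊆ τ → ν ∈ S

/-- S is open for K. -/
def IsOpenFor (K S : Cplx) : Prop :=
  S ⊆ K ∧ ∀ σ ∈ S, ∀ τ ∈ K, σ ⊆ τ → τ ∈ S

/-- S is closed for K. -/
def IsClosedFor (K S : Cplx) : Prop :=
  S ⊆ K ∧ IsSimpComplex S

/-- Closure of a finite set of simplexes: all nonempty subsets of members. -/
def cl (S : Cplx) : Cplx :=
  S.biUnion fun τ => τ.powerset.filter fun σ => σ.Nonempty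

/-- (σ, τ) is a free pair for K: τ is the only face of K properly containing σ. -/
def IsFreePair (K : Cplx) (σ τ : Simplex) : Prop :=
  σ ∈ K ∧ τ ∈ K ∧ σ ⊂ τ ∧ ∀ ρ ∈ K, σ ⊂ ρ → ρ = τ

/-- K' is an elementary expansion of K. -/
def ElemExpansion (K' K : Cplx) : Prop :=
  ∃ σ τ : Simplex, σ ∉ K ∧ τ ∉ K ∧ K' = K ∪ {σ, τ} ∧ IsFreePair K' σ τ

/-- K' is an elementary filling of K: K' = K ∪ {ν} with ν a facet of K'. -/
def ElemFilling (K' K : Cplx) : Prop :=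
  ∃ ν : Simplex, ν ∉ K ∧ K' = insert ν K ∧ ∀ ρ ∈ K', ν ⊆ ρ → ρ = ν

/-- A collapses onto B: a sequence of elementary collapses from A to B. -/
def Collapses (A B : Cplx) : Prop :=
  Relation.ReflTransGen (fun X Y : Cplx => ElemExpansion X Y) A B

/-- A Morse sequence from L to K, as W 0, …, W k, consisting of simplicial
complexes, each step an elementary expansion or an elementary filling. -/
def MorseSeq (L K : Cplx) (k : ℕ) (W : ℕ → Cplx) : Prop :=
  W 0 = L ∧ W k = K ∧ (∀ i ≤ k, IsSimpComplex (W i)) ∧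
  ∀ i < k, ElemExpansion (W (i+1)) (W i) ∨ ElemFilling (W (i+1)) (W i)

/-- F is a stack on S: monotone with respect to inclusion. -/
def IsStackOn (S : Cplx) (F : Simplex → ℤ) : Prop :=
  ∀ σ ∈ S, ∀ τ ∈ S, σ ⊆ τ → F σ ≤ F τ

/-- (σ, τ) is a regular pair of the Morse sequence W (of length k). -/
def RegularPair (k : ℕ) (W : ℕ → Cplx) (σ τ : Simplex) : Prop :=
  ∃ i < k, σ ∉ W i ∧ τ ∉ W i ∧ W (i+1) = W i ∪ {σ, τ} ∧ IsFreePair (W (i+1)) σ τ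

/-- An F-sequence: a Morse sequence whose regular pairs satisfy F σ = F τ. -/
def FSeq (F : Simplex → ℤ) (L K : Cplx) (k : ℕ) (W : ℕ → Cplx) : Prop :=
  MorseSeq L K k W ∧ ∀ σ τ : Simplex, RegularPair k W σ τ → F σ = F τ

/-- A flooding sequence: an F-sequence from ∅ to K such that F σ ≤ F τ whenever
σ ∈ K_i and τ ∈ K_j appears strictly later (τ ∉ K_i), with i < j. -/
def Flooding (F : Simplex → ℤ) (K : Cplx) (k : ℕ) (W : ℕ → Cplx) : Prop :=
  FSeq F ∅ K k W ∧
  ∀ i j : ℕ, i < j → j ≤ k → ∀ σ ∈ W i, ∀ τ ∈ W j, τ ∉ W i → F σ ≤ F τ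

/-- Coboundary δ(ν, S) of ν in S. -/
def cob (S : Cplx) (ν : Simplex) : Cplx :=
  S.filter fun μ => ν ⊆ μ ∧ μ.card = ν.card + 1

/-- Boundary ∂(ν, S) of ν in S. -/
def bdry (S : Cplx) (ν : Simplex) : Cplx :=
  S.filter fun η => η ⊆ ν ∧ η.card + 1 = ν.card

theorem cosimplicial_iff_inter_open_closed (K S : Cplx)
    (hK : IsSimpComplex K) (hS : S ⊆ K) :
    IsCosimplicial S ↔ ∃ U C : Cplx, IsOpenFor K U ∧ IsClosedFor K C ∧ S = U ∩ C := by
  constructor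
  · intro hcos
    refine ⟨K.filter (fun τ => ∃ σ ∈ S, σ ⊆ τ), cl S, ?_, ?_, ?_⟩
    · constructor
      · exact Finset.filter_subset _ _
      · intro σ hσ τ hτ hst
        simp only [Finset.mem_filter] at hσ ⊢
        obtain ⟨-, ρ, hρ, hρσ⟩ := hσ
        exact ⟨hτ, ρ, hρ, hρσ.trans hst⟩
    · constructor
      · intro τ hτ
        simp only [cl, Finset.mem_biUnion, Finset.mem_filter, Finset.mem_powerset] at hτ
        obtain ⟨ρ, hρ, hτρ, hne⟩ := hτ
        exact hK.2 ρ (hS hρ) τ hτρ hne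
      · constructor
        · intro τ hτ
          simp only [cl, Finset.mem_biUnion, Finset.mem_filter, Finset.mem_powerset] at hτ
          obtain ⟨ρ, hρ, -, hne⟩ := hτ
          exact hne
        · intro τ hτ σ hστ hne
          simp only [cl, Finset.mem_biUnion, Finset.mem_filter, Finset.mem_powerset] at hτ ⊢
          obtain ⟨ρ, hρ, hτρ, -⟩ := hτ
          exact ⟨ρ, hρ, hστ.trans hτρ, hne⟩
    · ext τ
      simp only [Finset.mem_inter, Finset.mem_filter, cl, Finset.mem_biUnion,
        Finset.mem_powerset]
      constructor
      · intro hτ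
        exact ⟨⟨hS hτ, τ, hτ, Finset.Subset.refl _⟩, τ, hτ, Finset.Subset.refl _,
          (hK.1 τ (hS hτ))⟩
      · rintro ⟨⟨-, σ, hσ, hστ⟩, ρ, hρ, hτρ, -⟩
        exact hcos σ hσ ρ hρ τ hστ hτρ
  · rintro ⟨U, C, hU, hC, rfl⟩
    intro σ hσ τ hτ ν hσν hντ
    simp only [Finset.mem_inter] at hσ hτ ⊢
    have hνK : ν ∈ K := hK.2 τ (hC.1 hτ.2) ν hντ
      (Finset.Nonempty.mono hσν (hC.2.1 σ hσ.2))
    refine ⟨hU.2 σ hσ.1 ν hνK hσν, hC.2.2 τ hτ.2 ν hντ ?_⟩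
    exact Finset.Nonempty.mono hσν (hC.2.1 σ hσ.2)
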